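/- arXiv:0809.3970 — 2 statements merged into one kernel-verified Lean document; each statement's English description precedes it below -/
import Mathlib

section
/- Define M(z) = Z(z) · diag(X(z)^{-1}, I_r). Then M is analytic on ℂ∖ℝ, has continuous boundary values M₊, M₋ on ℝ, and satisfies the jump relation M₊(z) = M₋(z) J_M(z) for z ∈ ℝ, where J_M(z) is the (r+2)×(r+2) block matrix [[I₂, x(z) v(z)^t e^{-V(z)}],[0, I_r]] with x(z) = (π_n(z), −2πi κ_{n-1}² π_{n-1}(z))^t. -/
open MeasureTheory Filter Matrix Asymptotics Polynomial

noncomputable section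

/-- Inverse of the asymptotic diagonal matrix `diag(z^n, z^{-n+r}, z^{-1}, ..., z^{-1})`. -/
def DinvM (n r : ℕ) (z : ℂ) : Matrix (Fin 2 ⊕ Fin r) (Fin 2 ⊕ Fin r) ℂ :=
  Matrix.diagonal (Sum.elim ![z ^ (-(n : ℤ)), z ^ ((n : ℤ) - (r : ℤ))] fun _ => z)

/-- The jump matrix `J_Z`: the identity except that its first row is
`(1, e^{-V(x)}, e^{-V(x)+a_1 x}, ..., e^{-V(x)+a_r x})`. -/
def JZmat (r : ℕ) (V : ℝ → ℝ) (a : Fin r → ℝ) (x : ℝ) :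
    Matrix (Fin 2 ⊕ Fin r) (Fin 2 ⊕ Fin r) ℂ :=
  1 + Matrix.of fun i j =>
    if i = Sum.inl 0 then
      Sum.elim ![0, Complex.exp ((-(V x) : ℝ) : ℂ)]
        (fun k => Complex.exp ((a k * x - V x : ℝ) : ℂ)) j
    else 0

/-- The column vector `x(z) = (π_n(z), −2πi κ_{n-1}² π_{n-1}(z))^t`. -/
def xcol (n : ℕ) (p : ℕ → Polynomial ℝ) (κ : ℕ → ℝ) (z : ℂ) : Fin 2 → ℂ :=
  ![Polynomial.aeval z (p n),
    -(2 * Real.pi * Complex.I) * ((κ (n - 1) : ℝ) : ℂ) ^ 2 * Polynomial.aeval z (p (n - 1))]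

/-- `M(z) = Z(z) · diag(X(z)^{-1}, I_r)`. -/
def Mfun (r : ℕ) (Z : ℂ → Matrix (Fin 2 ⊕ Fin r) (Fin 2 ⊕ Fin r) ℂ)
    (X : ℂ → Matrix (Fin 2) (Fin 2) ℂ) (z : ℂ) :
    Matrix (Fin 2 ⊕ Fin r) (Fin 2 ⊕ Fin r) ℂ :=
  Z z * Matrix.fromBlocks (X z)⁻¹ 0 0 1

/-- The jump matrix `J_M = [[I₂, x(z) v(z)^t e^{-V(z)}],[0, I_r]]`. -/
def JMmat (n r : ℕ) (V : ℝ → ℝ) (p : ℕ → Polynomial ℝ) (κ : ℕ → ℝ)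
    (a : Fin r → ℝ) (x : ℝ) : Matrix (Fin 2 ⊕ Fin r) (Fin 2 ⊕ Fin r) ℂ :=
  Matrix.fromBlocks 1
    (Matrix.of fun i j => xcol n p κ (x : ℂ) i * Complex.exp ((a j * x - V x : ℝ) : ℂ))
    0 1

private lemma inv_eq_adj' {A : Matrix (Fin 2) (Fin 2) ℂ} (h : A.det = 1) :
    A⁻¹ = A.adjugate := by
  rw [Matrix.inv_def, h, Ring.inverse_one, one_smul]

private lemma upperNeBot' (x : ℝ) : (nhdsWithin (x : ℂ) {z : ℂ | 0 < z.im}).NeBot := by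
  rw [← mem_closure_iff_nhdsWithin_neBot]
  have hc : Continuous fun t : ℝ => (x : ℂ) + t * Complex.I := by continuity
  have hf : Tendsto (fun t : ℝ => (x : ℂ) + t * Complex.I) (nhdsWithin 0 (Set.Ioi 0))
      (nhds (x : ℂ)) := by
    have h0 : Tendsto (fun t : ℝ => (x : ℂ) + t * Complex.I) (nhdsWithin 0 (Set.Ioi 0))
        (nhds ((x : ℂ) + (0 : ℝ) * Complex.I)) := (hc.tendsto 0).mono_left nhdsWithin_le_nhds
    simpa using h0
  exact mem_closure_of_tendsto hf (by
    filter_upwards [self_mem_nhdsWithin] with t ht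
    simpa [Complex.add_im, Complex.mul_im] using Set.mem_Ioi.mp ht)

private lemma lowerNeBot' (x : ℝ) : (nhdsWithin (x : ℂ) {z : ℂ | z.im < 0}).NeBot := by
  rw [← mem_closure_iff_nhdsWithin_neBot]
  have hc : Continuous fun t : ℝ => (x : ℂ) - t * Complex.I := by continuity
  have hf : Tendsto (fun t : ℝ => (x : ℂ) - t * Complex.I) (nhdsWithin 0 (Set.Ioi 0))
      (nhds (x : ℂ)) := by
    have h0 : Tendsto (fun t : ℝ => (x : ℂ) - t * Complex.I) (nhdsWithin 0 (Set.Ioi 0))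
        (nhds ((x : ℂ) - (0 : ℝ) * Complex.I)) := (hc.tendsto 0).mono_left nhdsWithin_le_nhds
    simpa using h0
  exact mem_closure_of_tendsto hf (by
    filter_upwards [self_mem_nhdsWithin] with t ht
    have := Set.mem_Ioi.mp ht
    simp [Complex.sub_im, Complex.mul_im]
    linarith)

/-- `M = Z · diag(X⁻¹, I_r)` is analytic off `ℝ`, has continuous boundary values, and
satisfies the jump relation `M₊(x) = M₋(x) J_M(x)` on `ℝ`. -/
theorem M_solves_RHP
    (n r : ℕ) (hr : 1 ≤ r) (hnr : r ≤ n)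
    (V : ℝ → ℝ) (hV : Continuous V)
    (hVint : ∀ (c : ℝ) (k : ℕ), Integrable (fun x : ℝ => |x| ^ k * Real.exp (c * x - V x)))
    (p : ℕ → Polynomial ℝ)
    (hmonic : ∀ k, (p k).Monic)
    (hdeg : ∀ k, (p k).natDegree = k)
    (horth : ∀ k m, k ≠ m → ∫ x : ℝ, (p k).eval x * (p m).eval x * Real.exp (-V x) = 0)
    (κ : ℕ → ℝ) (hκpos : ∀ k, 0 < κ k)
    (hκ : ∀ k, ∫ x : ℝ, ((p k).eval x) ^ 2 * Real.exp (-V x) = ((κ k) ^ 2)⁻¹)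
    (a : Fin r → ℝ) (ha : StrictAnti a) (ha0 : ∀ j, a j ≠ 0)
    (X : ℂ → Matrix (Fin 2) (Fin 2) ℂ)
    (hXan : ∀ z : ℂ, z.im ≠ 0 → ∀ i j, AnalyticAt ℂ (fun w => X w i j) z)
    (hXcol1 : ∀ z : ℂ, z.im ≠ 0 → ∀ i, X z i 0 = xcol n p κ z i)
    (hXcol2 : ∀ z : ℂ, z.im ≠ 0 → ∀ i, X z i 1 =
      (2 * Real.pi * Complex.I)⁻¹ *
        ∫ s : ℝ, xcol n p κ (s : ℂ) i * ((Real.exp (-V s) : ℝ) : ℂ) / ((s : ℂ) - z))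
    (hXdet : ∀ z : ℂ, z.im ≠ 0 → (X z).det = 1)
    (Xp Xm : ℝ → Matrix (Fin 2) (Fin 2) ℂ)
    (hXp : ∀ x : ℝ, Tendsto X (nhdsWithin (x : ℂ) {z : ℂ | 0 < z.im}) (nhds (Xp x)))
    (hXm : ∀ x : ℝ, Tendsto X (nhdsWithin (x : ℂ) {z : ℂ | z.im < 0}) (nhds (Xm x)))
    (hXpcont : Continuous Xp) (hXmcont : Continuous Xm)
    (hXjump : ∀ x : ℝ, Xp x = Xm x * !![1, Complex.exp ((-(V x) : ℝ) : ℂ); 0, 1])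
    (hXpdet : ∀ x : ℝ, (Xp x).det = 1) (hXmdet : ∀ x : ℝ, (Xm x).det = 1)
    (Z : ℂ → Matrix (Fin 2 ⊕ Fin r) (Fin 2 ⊕ Fin r) ℂ)
    (hZan : ∀ z : ℂ, z.im ≠ 0 → ∀ i j, AnalyticAt ℂ (fun w => Z w i j) z)
    (hZunit : ∀ z : ℂ, z.im ≠ 0 → IsUnit (Z z))
    (Zp Zm : ℝ → Matrix (Fin 2 ⊕ Fin r) (Fin 2 ⊕ Fin r) ℂ)
    (hZp : ∀ x : ℝ, Tendsto Z (nhdsWithin (x : ℂ) {z : ℂ | 0 < z.im}) (nhds (Zp x)))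
    (hZm : ∀ x : ℝ, Tendsto Z (nhdsWithin (x : ℂ) {z : ℂ | z.im < 0}) (nhds (Zm x)))
    (hZpcont : Continuous Zp) (hZmcont : Continuous Zm)
    (hjump : ∀ x : ℝ, Zp x = Zm x * JZmat r V a x)
    (hasymp : ∀ i j, (fun z : ℂ => (Z z * DinvM n r z - 1) i j)
        =O[Bornology.cobounded ℂ] fun z => ‖z‖⁻¹)
 :
    (∀ z : ℂ, z.im ≠ 0 → ∀ i j, AnalyticAt ℂ (fun w => Mfun r Z X w i j) z) ∧
    ∃ Mp Mm : ℝ → Matrix (Fin 2 ⊕ Fin r) (Fin 2 ⊕ Fin r) ℂ,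
      Continuous Mp ∧ Continuous Mm ∧
      (∀ x : ℝ, Tendsto (Mfun r Z X) (nhdsWithin (x : ℂ) {z : ℂ | 0 < z.im}) (nhds (Mp x))) ∧
      (∀ x : ℝ, Tendsto (Mfun r Z X) (nhdsWithin (x : ℂ) {z : ℂ | z.im < 0}) (nhds (Mm x))) ∧
      ∀ x : ℝ, Mp x = Mm x * JMmat n r V p κ a x := by
  -- the continuous "adjugate" version of `fromBlocks A⁻¹ 0 0 1`
  set G : Matrix (Fin 2) (Fin 2) ℂ → Matrix (Fin 2 ⊕ Fin r) (Fin 2 ⊕ Fin r) ℂ :=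
    fun A => Matrix.fromBlocks A.adjugate 0 0 1 with hG
  have hGcont : Continuous G :=
    Continuous.matrix_fromBlocks (continuous_id.matrix_adjugate) continuous_const
      continuous_const continuous_const
  have hMeq : ∀ z : ℂ, z.im ≠ 0 → Mfun r Z X z = Z z * G (X z) := by
    intro z hz
    unfold Mfun
    rw [hG, inv_eq_adj' (hXdet z hz)]
  have hopen : IsOpen {w : ℂ | w.im ≠ 0} := by
    have : {w : ℂ | w.im ≠ 0} = Complex.im ⁻¹' {(0 : ℝ)}ᶜ := rfl
    rw [this]
    exact isOpen_compl_singleton.preimage Complex.continuous_im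
  constructor
  · -- analyticity
    intro z hz i j
    have hGan : ∀ k l, AnalyticAt ℂ (fun w => G (X w) k l) z := by
      rintro (k | k) (l | l)
      · have : (fun w => G (X w) (Sum.inl k) (Sum.inl l))
            = fun w => (X w).adjugate k l := by
          funext w; simp [hG, Matrix.fromBlocks_apply₁₁]
        rw [this]
        have hadj : ∀ w : ℂ, (X w).adjugate k l
            = (!![X w 1 1, -X w 0 1; -X w 1 0, X w 0 0] : Matrix (Fin 2) (Fin 2) ℂ) k l := by
          intro w
          rw [Matrix.adjugate_fin_two]
        simp only [hadj]
        fin_cases k <;> fin_cases l <;>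
          simp only [Matrix.cons_val', Matrix.cons_val_zero, Matrix.cons_val_one,
            Matrix.head_cons, Matrix.empty_val', Matrix.cons_val_fin_one, Matrix.head_fin_const]
        · exact hXan z hz 1 1
        · exact (hXan z hz 0 1).neg
        · exact (hXan z hz 1 0).neg
        · exact hXan z hz 0 0
      · have : (fun w => G (X w) (Sum.inl k) (Sum.inr l)) = fun _ => 0 := by
          funext w; simp [hG]
        rw [this]; exact analyticAt_const
      · have : (fun w => G (X w) (Sum.inr k) (Sum.inl l)) = fun _ => 0 := by
          funext w; simp [hG]
        rw [this]; exact analyticAt_const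
      · have : (fun w => G (X w) (Sum.inr k) (Sum.inr l))
            = fun _ => (1 : Matrix (Fin r) (Fin r) ℂ) k l := by
          funext w; simp [hG]
        rw [this]; exact analyticAt_const
    have hsum : AnalyticAt ℂ (fun w => ∑ k, Z w i k * G (X w) k j) z :=
      Finset.analyticAt_fun_sum _ fun k _ => (hZan z hz i k).mul (hGan k j)
    refine hsum.congr ?_
    filter_upwards [hopen.mem_nhds hz] with w hw
    rw [hMeq w hw, Matrix.mul_apply]
  · -- boundary values and jump
    refine ⟨fun x => Zp x * Matrix.fromBlocks (Xp x)⁻¹ 0 0 1,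
      fun x => Zm x * Matrix.fromBlocks (Xm x)⁻¹ 0 0 1, ?_, ?_, ?_, ?_, ?_⟩
    · have heq : (fun x => Zp x * Matrix.fromBlocks (Xp x)⁻¹ 0 0 1)
          = fun x => Zp x * G (Xp x) := by
        funext x; rw [hG, inv_eq_adj' (hXpdet x)]
      rw [heq]
      exact hZpcont.matrix_mul (hGcont.comp hXpcont)
    · have heq : (fun x => Zm x * Matrix.fromBlocks (Xm x)⁻¹ 0 0 1)
          = fun x => Zm x * G (Xm x) := by
        funext x; rw [hG, inv_eq_adj' (hXmdet x)]
      rw [heq]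
      exact hZmcont.matrix_mul (hGcont.comp hXmcont)
    · intro x
      have h1 : Tendsto (fun z => Z z * G (X z)) (nhdsWithin (x : ℂ) {z : ℂ | 0 < z.im})
          (nhds (Zp x * G (Xp x))) :=
        (hZp x).mul ((hGcont.tendsto (Xp x)).comp (hXp x))
      have h2 : Mfun r Z X =ᶠ[nhdsWithin (x : ℂ) {z : ℂ | 0 < z.im}]
          fun z => Z z * G (X z) := by
        filter_upwards [self_mem_nhdsWithin] with w hw
        exact hMeq w (ne_of_gt hw)
      have := h1.congr' h2.symm
      rwa [show Zp x * G (Xp x) = Zp x * Matrix.fromBlocks (Xp x)⁻¹ 0 0 1 by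
        rw [hG, inv_eq_adj' (hXpdet x)]] at this
    · intro x
      have h1 : Tendsto (fun z => Z z * G (X z)) (nhdsWithin (x : ℂ) {z : ℂ | z.im < 0})
          (nhds (Zm x * G (Xm x))) :=
        (hZm x).mul ((hGcont.tendsto (Xm x)).comp (hXm x))
      have h2 : Mfun r Z X =ᶠ[nhdsWithin (x : ℂ) {z : ℂ | z.im < 0}]
          fun z => Z z * G (X z) := by
        filter_upwards [self_mem_nhdsWithin] with w hw
        exact hMeq w (ne_of_lt hw)
      have := h1.congr' h2.symm
      rwa [show Zm x * G (Xm x) = Zm x * Matrix.fromBlocks (Xm x)⁻¹ 0 0 1 by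
        rw [hG, inv_eq_adj' (hXmdet x)]] at this
    · -- the jump relation
      intro x
      have hlNB : (nhdsWithin (x : ℂ) {z : ℂ | z.im < 0}).NeBot := lowerNeBot' x
      -- first column of Xm is xcol
      have hXmcol : ∀ i, Xm x i 0 = xcol n p κ (x : ℂ) i := by
        intro i
        have hev : Continuous fun A : Matrix (Fin 2) (Fin 2) ℂ => A i 0 :=
          continuous_id.matrix_elem i 0
        have h1 : Tendsto (fun z => X z i 0) (nhdsWithin (x : ℂ) {z : ℂ | z.im < 0})
            (nhds (Xm x i 0)) := (hev.tendsto (Xm x)).comp (hXm x)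
        have hxc : Continuous fun z : ℂ => xcol n p κ z i := by
          fin_cases i
          · simpa [xcol] using (p n).continuous_aeval
          · have hc2 : Continuous fun z : ℂ =>
                (-(2 * Real.pi * Complex.I) * ((κ (n - 1) : ℝ) : ℂ) ^ 2) *
                  Polynomial.aeval z (p (n - 1)) :=
              continuous_const.mul (p (n - 1)).continuous_aeval
            simpa [xcol] using hc2
        have h2 : Tendsto (fun z => X z i 0) (nhdsWithin (x : ℂ) {z : ℂ | z.im < 0})
            (nhds (xcol n p κ (x : ℂ) i)) := by
          refine ((hxc.tendsto (x : ℂ)).mono_left nhdsWithin_le_nhds).congr' ?_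
          filter_upwards [self_mem_nhdsWithin] with w hw
          exact (hXcol1 w (ne_of_lt hw) i).symm
        exact tendsto_nhds_unique h1 h2
      -- JZ as a block matrix
      set B : Matrix (Fin 2) (Fin r) ℂ :=
        Matrix.of fun i j => if i = 0 then Complex.exp ((a j * x - V x : ℝ) : ℂ) else 0 with hB
      have hJZblock : JZmat r V a x =
          Matrix.fromBlocks (!![1, Complex.exp ((-(V x) : ℝ) : ℂ); 0, 1]) B 0 1 := by
        ext i j
        rcases i with i | i <;> rcases j with j | j
        · rw [Matrix.fromBlocks_apply₁₁]
          fin_cases i <;> fin_cases j <;>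
            simp [JZmat, Matrix.one_apply]
        · rw [Matrix.fromBlocks_apply₁₂]
          fin_cases i <;> simp [JZmat, hB, Matrix.one_apply]
        · rw [Matrix.fromBlocks_apply₂₁]
          simp [JZmat, Matrix.one_apply]
        · rw [Matrix.fromBlocks_apply₂₂]
          simp [JZmat, Matrix.one_apply]
      have hXpu : IsUnit (Xp x).det := by rw [hXpdet x]; exact isUnit_one
      have hXmu : IsUnit (Xm x).det := by rw [hXmdet x]; exact isUnit_one
      -- the key matrix identity
      have key : Matrix.fromBlocks (Xm x) 0 0 (1 : Matrix (Fin r) (Fin r) ℂ) *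
          (JZmat r V a x * Matrix.fromBlocks (Xp x)⁻¹ 0 0 1) = JMmat n r V p κ a x := by
        rw [hJZblock, Matrix.fromBlocks_multiply, Matrix.fromBlocks_multiply]
        simp only [Matrix.mul_zero, Matrix.zero_mul, Matrix.mul_one, Matrix.one_mul,
          add_zero, zero_add]
        have h11 : Xm x * (!![1, Complex.exp ((-(V x) : ℝ) : ℂ); 0, 1] * (Xp x)⁻¹) = 1 := by
          rw [← Matrix.mul_assoc, ← hXjump x, Matrix.mul_nonsing_inv _ hXpu]
        have h12 : Xm x * B =
            Matrix.of fun i j => xcol n p κ (x : ℂ) i * Complex.exp ((a j * x - V x : ℝ) : ℂ) := by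
          ext i j
          rw [Matrix.mul_apply, Fin.sum_univ_two]
          simp [hB, hXmcol i]
        rw [h11, h12]
        rfl
      -- conclude
      have hfb : Matrix.fromBlocks (Xm x)⁻¹ 0 0 (1 : Matrix (Fin r) (Fin r) ℂ) *
          Matrix.fromBlocks (Xm x) 0 0 1 = 1 := by
        rw [Matrix.fromBlocks_multiply]
        simp [Matrix.nonsing_inv_mul _ hXmu, Matrix.fromBlocks_one]
      calc Zp x * Matrix.fromBlocks (Xp x)⁻¹ 0 0 1
          = Zm x * (JZmat r V a x * Matrix.fromBlocks (Xp x)⁻¹ 0 0 1) := by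
            rw [hjump x, Matrix.mul_assoc]
        _ = Zm x * (Matrix.fromBlocks (Xm x)⁻¹ 0 0 1 *
              (Matrix.fromBlocks (Xm x) 0 0 1 *
                (JZmat r V a x * Matrix.fromBlocks (Xp x)⁻¹ 0 0 1))) := by
            rw [← Matrix.mul_assoc (Matrix.fromBlocks (Xm x)⁻¹ 0 0 1), hfb, Matrix.one_mul]
        _ = Zm x * Matrix.fromBlocks (Xm x)⁻¹ 0 0 1 * JMmat n r V p κ a x := by
            rw [key, Matrix.mul_assoc]

end
end

section
/- Write M(z) = Z(z)·diag(X(z)^{-1}, I_r) in 2 + r block form M = [[M^{(11)}, M^{(12)}],[M^{(21)}, M^{(22)}]], with M^{(11)} the upper-left 2×2 block and M^{(21)} the lower-left r×2 block. Then the boundary values of M^{(11)} and of M^{(21)} from above and below ℝ agree, so M^{(11)} and M^{(21)} extend to entire matrix-valued functions on ℂ. -/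
open MeasureTheory Filter Matrix Asymptotics Polynomial

noncomputable section

open Set

lemma aux_ne (c t : ℝ) (ht : t ∈ Ioo (min c 0) (max c 0)) : t ≠ 0 := by
  rintro rfl
  rcases le_total c 0 with h' | h'
  · rw [max_eq_right h'] at ht; exact lt_irrefl _ ht.2
  · rw [min_eq_right h'] at ht; exact lt_irrefl _ ht.1

lemma rect_zero (f : ℂ → ℂ) (hc : Continuous f)
    (hd : ∀ z : ℂ, z.im ≠ 0 → DifferentiableAt ℂ f z) (z w : ℂ) :
    (∫ x : ℝ in z.re..w.re, f (x + z.im * Complex.I)) -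
      (∫ x : ℝ in z.re..w.re, f (x + w.im * Complex.I)) +
      Complex.I • (∫ y : ℝ in z.im..w.im, f (w.re + y * Complex.I)) -
      Complex.I • (∫ y : ℝ in z.im..w.im, f (z.re + y * Complex.I)) = 0 := by
  have hdiff : ∀ (a b : ℂ), (∀ t : ℝ,
      t ∈ Ioo (min a.im b.im) (max a.im b.im) → t ≠ 0) →
      (∫ x : ℝ in a.re..b.re, f (x + a.im * Complex.I)) -
      (∫ x : ℝ in a.re..b.re, f (x + b.im * Complex.I)) +
      Complex.I • (∫ y : ℝ in a.im..b.im, f (b.re + y * Complex.I)) -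
      Complex.I • (∫ y : ℝ in a.im..b.im, f (a.re + y * Complex.I)) = 0 := by
    intro a b hne
    apply Complex.integral_boundary_rect_eq_zero_of_continuousOn_of_differentiableOn f a b
      hc.continuousOn
    intro p hp
    exact (hd p (hne p.im hp.2)).differentiableWithinAt
  have R1 := hdiff z (Complex.ofReal w.re) (by
    simp only [Complex.ofReal_im]
    exact fun t ht => aux_ne z.im t ht)
  have R2 := hdiff (Complex.ofReal z.re) w (by
    simp only [Complex.ofReal_im]
    intro t ht
    rw [min_comm, max_comm] at ht
    exact aux_ne w.im t ht)
  simp only [Complex.ofReal_im, Complex.ofReal_re, Complex.ofReal_zero, zero_mul,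
    add_zero, smul_eq_mul] at R1 R2
  simp only [smul_eq_mul]
  have key : ∀ c : ℝ, IntervalIntegrable (fun y : ℝ => f (c + y * Complex.I)) volume z.im 0 ∧
      IntervalIntegrable (fun y : ℝ => f (c + y * Complex.I)) volume 0 w.im := by
    intro c
    constructor <;> exact (hc.comp (by fun_prop)).intervalIntegrable _ _
  have add1 := intervalIntegral.integral_add_adjacent_intervals (key w.re).1 (key w.re).2
  have add2 := intervalIntegral.integral_add_adjacent_intervals (key z.re).1 (key z.re).2
  linear_combination R1 + R2 - Complex.I * add1 + Complex.I * add2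

lemma hasDerivAt_primitive (f : ℂ → ℂ) (hc : Continuous f)
    (hd : ∀ z : ℂ, z.im ≠ 0 → DifferentiableAt ℂ f z) (z : ℂ) :
    HasDerivAt (fun w : ℂ => (∫ x : ℝ in (0:ℝ)..w.re, f x) +
      Complex.I * ∫ y : ℝ in (0:ℝ)..w.im, f (w.re + y * Complex.I)) (f z) z := by
  set H : ℂ → ℂ := fun w : ℂ => (∫ x : ℝ in (0:ℝ)..w.re, f x) +
      Complex.I * ∫ y : ℝ in (0:ℝ)..w.im, f (w.re + y * Complex.I) with hH
  have hint : ∀ (c : ℝ) (g : ℝ → ℂ), Continuous g → ∀ a b : ℝ,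
      IntervalIntegrable g volume a b := fun c g hg a b => hg.intervalIntegrable a b
  have HD : ∀ w : ℂ, H w - H z = (∫ x : ℝ in z.re..w.re, f (x + z.im * Complex.I)) +
      Complex.I * ∫ y : ℝ in z.im..w.im, f (w.re + y * Complex.I) := by
    intro w
    have R := rect_zero f hc hd (Complex.ofReal z.re) ((Complex.ofReal w.re) +
      Complex.ofReal z.im * Complex.I)
    simp only [Complex.ofReal_im, Complex.ofReal_re, Complex.add_re, Complex.add_im,
      Complex.mul_re, Complex.mul_im, Complex.I_re, Complex.I_im, mul_zero, mul_one,
      zero_mul, sub_zero, zero_add, add_zero, Complex.ofReal_zero, smul_eq_mul] at R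
    have adj1 : (∫ x : ℝ in (0:ℝ)..z.re, f x) + (∫ x : ℝ in z.re..w.re, f x)
        = ∫ x : ℝ in (0:ℝ)..w.re, f x :=
      intervalIntegral.integral_add_adjacent_intervals
        ((hc.comp (by fun_prop)).intervalIntegrable _ _)
        ((hc.comp (by fun_prop)).intervalIntegrable _ _)
    have adj2 : (∫ y : ℝ in (0:ℝ)..z.im, f (w.re + y * Complex.I)) +
        (∫ y : ℝ in z.im..w.im, f (w.re + y * Complex.I))
        = ∫ y : ℝ in (0:ℝ)..w.im, f (w.re + y * Complex.I) :=
      intervalIntegral.integral_add_adjacent_intervals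
        ((hc.comp (by fun_prop)).intervalIntegrable _ _)
        ((hc.comp (by fun_prop)).intervalIntegrable _ _)
    simp only [hH]
    linear_combination R - adj1 - Complex.I * adj2
  rw [hasDerivAt_iff_isLittleO, Asymptotics.isLittleO_iff]
  intro c hc0
  obtain ⟨δ, hδ0, hδ⟩ := Metric.continuousAt_iff.mp (hc.continuousAt (x := z)) (c / 2)
    (by positivity)
  filter_upwards [Metric.ball_mem_nhds z (by positivity : (0:ℝ) < δ / 2)] with w hw
  have hwz : ‖w - z‖ < δ / 2 := by
    rwa [Metric.mem_ball, dist_eq_norm] at hw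
  have hre : |w.re - z.re| ≤ ‖w - z‖ := by
    simpa using Complex.abs_re_le_norm (w - z)
  have him : |w.im - z.im| ≤ ‖w - z‖ := by
    simpa using Complex.abs_im_le_norm (w - z)
  -- rewrite the difference
  have key : H w - H z - (w - z) • f z =
      (∫ x : ℝ in z.re..w.re, (f (x + z.im * Complex.I) - f z)) +
      Complex.I * ∫ y : ℝ in z.im..w.im, (f (w.re + y * Complex.I) - f z) := by
    have cont1 : Continuous fun x : ℝ => f (↑x + ↑z.im * Complex.I) := hc.comp (by fun_prop)
    have cont2 : Continuous fun y : ℝ => f (↑w.re + ↑y * Complex.I) := hc.comp (by fun_prop)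
    have e1 : (∫ x : ℝ in z.re..w.re, (f (↑x + ↑z.im * Complex.I) - f z))
        = (∫ x : ℝ in z.re..w.re, f (↑x + ↑z.im * Complex.I)) - (w.re - z.re) • f z := by
      rw [intervalIntegral.integral_sub (cont1.intervalIntegrable _ _) intervalIntegrable_const,
        intervalIntegral.integral_const]
    have e2 : (∫ y : ℝ in z.im..w.im, (f (↑w.re + ↑y * Complex.I) - f z))
        = (∫ y : ℝ in z.im..w.im, f (↑w.re + ↑y * Complex.I)) - (w.im - z.im) • f z := by
      rw [intervalIntegral.integral_sub (cont2.intervalIntegrable _ _) intervalIntegrable_const,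
        intervalIntegral.integral_const]
    rw [HD w, e1, e2]
    have hwzsplit : (w - z) = ((w.re - z.re : ℝ) : ℂ) + ((w.im - z.im : ℝ) : ℂ) * Complex.I := by
      apply Complex.ext <;> simp
    rw [smul_eq_mul, hwzsplit]
    simp only [Complex.real_smul]
    push_cast
    ring
  rw [key]
  have b1 : ‖∫ x : ℝ in z.re..w.re, (f (x + z.im * Complex.I) - f z)‖ ≤
      (c / 2) * |w.re - z.re| := by
    apply intervalIntegral.norm_integral_le_of_norm_le_const
    intro x hx
    have hx' : |x - z.re| ≤ |w.re - z.re| := by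
      have := Set.abs_sub_left_of_mem_uIcc (Set.uIoc_subset_uIcc hx)
      simpa using this
    have hdist : dist (↑x + ↑z.im * Complex.I) z < δ := by
      have heq : (↑x + ↑z.im * Complex.I) - z = ((x - z.re : ℝ) : ℂ) := by
        apply Complex.ext <;> simp
      rw [dist_eq_norm, heq]
      calc ‖((x - z.re : ℝ) : ℂ)‖ = |x - z.re| := by
            rw [Complex.norm_real, Real.norm_eq_abs]
      _ ≤ |w.re - z.re| := hx'
      _ ≤ ‖w - z‖ := hre
      _ < δ / 2 := hwz
      _ < δ := by linarith
    have := hδ hdist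
    rw [dist_eq_norm] at this
    exact le_of_lt this
  have b2 : ‖∫ y : ℝ in z.im..w.im, (f (w.re + y * Complex.I) - f z)‖ ≤
      (c / 2) * |w.im - z.im| := by
    apply intervalIntegral.norm_integral_le_of_norm_le_const
    intro y hy
    have hy' : |y - z.im| ≤ |w.im - z.im| := by
      have := Set.abs_sub_left_of_mem_uIcc (Set.uIoc_subset_uIcc hy)
      simpa using this
    have hdist : dist (↑w.re + ↑y * Complex.I) z < δ := by
      have heq : (↑w.re + ↑y * Complex.I) - z
          = ((w.re - z.re : ℝ) : ℂ) + ((y - z.im : ℝ) : ℂ) * Complex.I := by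
        apply Complex.ext <;> simp
      rw [dist_eq_norm, heq]
      calc ‖((w.re - z.re : ℝ) : ℂ) + ((y - z.im : ℝ) : ℂ) * Complex.I‖
          ≤ ‖((w.re - z.re : ℝ) : ℂ)‖ + ‖((y - z.im : ℝ) : ℂ) * Complex.I‖ := norm_add_le _ _
      _ = |w.re - z.re| + |y - z.im| := by
            rw [norm_mul, Complex.norm_I, mul_one, Complex.norm_real, Complex.norm_real,
              Real.norm_eq_abs, Real.norm_eq_abs]
      _ ≤ ‖w - z‖ + |w.im - z.im| := by gcongr
      _ ≤ ‖w - z‖ + ‖w - z‖ := by gcongr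
      _ < δ / 2 + δ / 2 := by linarith
      _ = δ := by ring
    have := hδ hdist
    rw [dist_eq_norm] at this
    exact le_of_lt this
  calc ‖(∫ x : ℝ in z.re..w.re, (f (x + z.im * Complex.I) - f z)) +
      Complex.I * ∫ y : ℝ in z.im..w.im, (f (w.re + y * Complex.I) - f z)‖
      ≤ ‖∫ x : ℝ in z.re..w.re, (f (x + z.im * Complex.I) - f z)‖ +
        ‖Complex.I * ∫ y : ℝ in z.im..w.im, (f (w.re + y * Complex.I) - f z)‖ := norm_add_le _ _
    _ = ‖∫ x : ℝ in z.re..w.re, (f (x + z.im * Complex.I) - f z)‖ +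
        ‖∫ y : ℝ in z.im..w.im, (f (w.re + y * Complex.I) - f z)‖ := by
        rw [norm_mul, Complex.norm_I, one_mul]
    _ ≤ (c / 2) * |w.re - z.re| + (c / 2) * |w.im - z.im| := add_le_add b1 b2
    _ ≤ (c / 2) * ‖w - z‖ + (c / 2) * ‖w - z‖ := by gcongr <;> positivity
    _ = c * ‖w - z‖ := by ring

lemma differentiable_of_continuous_off_real (f : ℂ → ℂ) (hc : Continuous f)
    (hd : ∀ z : ℂ, z.im ≠ 0 → DifferentiableAt ℂ f z) : Differentiable ℂ f := by
  have key := hasDerivAt_primitive f hc hd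
  have hH : Differentiable ℂ (fun w : ℂ => (∫ x : ℝ in (0:ℝ)..w.re, f x) +
      Complex.I * ∫ y : ℝ in (0:ℝ)..w.im, f (w.re + y * Complex.I)) :=
    fun z => (key z).differentiableAt
  have hf : f = deriv (fun w : ℂ => (∫ x : ℝ in (0:ℝ)..w.re, f x) +
      Complex.I * ∫ y : ℝ in (0:ℝ)..w.im, f (w.re + y * Complex.I)) :=
    funext fun z => ((key z).deriv).symm
  rw [hf]
  intro z
  exact (((Complex.analyticOnNhd_univ_iff_differentiable.mpr hH).deriv) z trivial).differentiableAt

def adj2 (A : Matrix (Fin 2) (Fin 2) ℂ) : Matrix (Fin 2) (Fin 2) ℂ :=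
  !![A 1 1, -A 0 1; -A 1 0, A 0 0]

lemma adj2_eq_inv (A : Matrix (Fin 2) (Fin 2) ℂ) (h : A.det = 1) : A⁻¹ = adj2 A := by
  rw [Matrix.inv_def, h, Ring.inverse_one, one_smul, Matrix.adjugate_fin_two, adj2]

lemma continuous_adj2_entry (k j : Fin 2) :
    Continuous fun A : Matrix (Fin 2) (Fin 2) ℂ => adj2 A k j := by
  fin_cases k <;> fin_cases j <;>
    simp only [adj2, Matrix.cons_val', Matrix.cons_val_zero, Matrix.cons_val_one,
      Matrix.head_cons, Matrix.empty_val', Matrix.cons_val_fin_one, Matrix.of_apply,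
      Matrix.head_fin_const, Fin.isValue] <;>
    first
      | exact continuous_id.matrix_elem _ _
      | exact (continuous_id.matrix_elem _ _).neg

lemma neBot_upper (x : ℝ) : (nhdsWithin (x:ℂ) {z : ℂ | 0 < z.im}).NeBot := by
  rw [← mem_closure_iff_nhdsWithin_neBot]
  have hcont : Continuous fun t : ℝ => (x:ℂ) + t * Complex.I := by fun_prop
  have ht : Tendsto (fun t : ℝ => (x:ℂ) + t * Complex.I) (nhdsWithin 0 (Set.Ioi 0))
      (nhds (x:ℂ)) := by
    have h0 := (hcont.tendsto 0).mono_left (nhdsWithin_le_nhds (s := Set.Ioi 0))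
    simpa using h0
  refine mem_closure_of_tendsto ht ?_
  filter_upwards [self_mem_nhdsWithin] with t ht'
  simp only [Set.mem_setOf_eq, Complex.add_im, Complex.ofReal_im, Complex.mul_im,
    Complex.I_im, Complex.I_re, Complex.ofReal_re, mul_one, mul_zero, add_zero, zero_add]
  exact ht'

lemma neBot_lower (x : ℝ) : (nhdsWithin (x:ℂ) {z : ℂ | z.im < 0}).NeBot := by
  rw [← mem_closure_iff_nhdsWithin_neBot]
  have hcont : Continuous fun t : ℝ => (x:ℂ) + t * Complex.I := by fun_prop
  have ht : Tendsto (fun t : ℝ => (x:ℂ) + t * Complex.I) (nhdsWithin 0 (Set.Iio 0))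
      (nhds (x:ℂ)) := by
    have h0 := (hcont.tendsto 0).mono_left (nhdsWithin_le_nhds (s := Set.Iio 0))
    simpa using h0
  refine mem_closure_of_tendsto ht ?_
  filter_upwards [self_mem_nhdsWithin] with t ht'
  simp only [Set.mem_setOf_eq, Complex.add_im, Complex.ofReal_im, Complex.mul_im,
    Complex.I_im, Complex.I_re, Complex.ofReal_re, mul_one, mul_zero, add_zero, zero_add]
  exact ht'


/-- The boundary values of the first two columns of `M` from above and below agree, and
these two columns (the blocks `M^{(11)}` and `M^{(21)}`) extend to an entire function. -/
theorem M_left_blocks_entire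
    (n r : ℕ) (hr : 1 ≤ r) (hnr : r ≤ n)
    (V : ℝ → ℝ) (hV : Continuous V)
    (hVint : ∀ (c : ℝ) (k : ℕ), Integrable (fun x : ℝ => |x| ^ k * Real.exp (c * x - V x)))
    (p : ℕ → Polynomial ℝ)
    (hmonic : ∀ k, (p k).Monic)
    (hdeg : ∀ k, (p k).natDegree = k)
    (horth : ∀ k m, k ≠ m → ∫ x : ℝ, (p k).eval x * (p m).eval x * Real.exp (-V x) = 0)
    (κ : ℕ → ℝ) (hκpos : ∀ k, 0 < κ k)
    (hκ : ∀ k, ∫ x : ℝ, ((p k).eval x) ^ 2 * Real.exp (-V x) = ((κ k) ^ 2)⁻¹)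
    (a : Fin r → ℝ) (ha : StrictAnti a) (ha0 : ∀ j, a j ≠ 0)
    (X : ℂ → Matrix (Fin 2) (Fin 2) ℂ)
    (hXan : ∀ z : ℂ, z.im ≠ 0 → ∀ i j, AnalyticAt ℂ (fun w => X w i j) z)
    (hXcol1 : ∀ z : ℂ, z.im ≠ 0 → ∀ i, X z i 0 = xcol n p κ z i)
    (hXcol2 : ∀ z : ℂ, z.im ≠ 0 → ∀ i, X z i 1 =
      (2 * Real.pi * Complex.I)⁻¹ *
        ∫ s : ℝ, xcol n p κ (s : ℂ) i * ((Real.exp (-V s) : ℝ) : ℂ) / ((s : ℂ) - z))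
    (hXdet : ∀ z : ℂ, z.im ≠ 0 → (X z).det = 1)
    (Xp Xm : ℝ → Matrix (Fin 2) (Fin 2) ℂ)
    (hXp : ∀ x : ℝ, Tendsto X (nhdsWithin (x : ℂ) {z : ℂ | 0 < z.im}) (nhds (Xp x)))
    (hXm : ∀ x : ℝ, Tendsto X (nhdsWithin (x : ℂ) {z : ℂ | z.im < 0}) (nhds (Xm x)))
    (hXpcont : Continuous Xp) (hXmcont : Continuous Xm)
    (hXjump : ∀ x : ℝ, Xp x = Xm x * !![1, Complex.exp ((-(V x) : ℝ) : ℂ); 0, 1])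
    (hXpdet : ∀ x : ℝ, (Xp x).det = 1) (hXmdet : ∀ x : ℝ, (Xm x).det = 1)
    (Z : ℂ → Matrix (Fin 2 ⊕ Fin r) (Fin 2 ⊕ Fin r) ℂ)
    (hZan : ∀ z : ℂ, z.im ≠ 0 → ∀ i j, AnalyticAt ℂ (fun w => Z w i j) z)
    (hZunit : ∀ z : ℂ, z.im ≠ 0 → IsUnit (Z z))
    (Zp Zm : ℝ → Matrix (Fin 2 ⊕ Fin r) (Fin 2 ⊕ Fin r) ℂ)
    (hZp : ∀ x : ℝ, Tendsto Z (nhdsWithin (x : ℂ) {z : ℂ | 0 < z.im}) (nhds (Zp x)))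
    (hZm : ∀ x : ℝ, Tendsto Z (nhdsWithin (x : ℂ) {z : ℂ | z.im < 0}) (nhds (Zm x)))
    (hZpcont : Continuous Zp) (hZmcont : Continuous Zm)
    (hjump : ∀ x : ℝ, Zp x = Zm x * JZmat r V a x)
    (hasymp : ∀ i j, (fun z : ℂ => (Z z * DinvM n r z - 1) i j)
        =O[Bornology.cobounded ℂ] fun z => ‖z‖⁻¹)
    (Mp Mm : ℝ → Matrix (Fin 2 ⊕ Fin r) (Fin 2 ⊕ Fin r) ℂ)
    (hMp : ∀ x : ℝ, Tendsto (Mfun r Z X) (nhdsWithin (x : ℂ) {z : ℂ | 0 < z.im}) (nhds (Mp x)))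
    (hMm : ∀ x : ℝ, Tendsto (Mfun r Z X) (nhdsWithin (x : ℂ) {z : ℂ | z.im < 0}) (nhds (Mm x)))
 :
    (∀ x : ℝ, ∀ i, ∀ j : Fin 2, Mp x i (Sum.inl j) = Mm x i (Sum.inl j)) ∧
    ∃ F : ℂ → Matrix (Fin 2 ⊕ Fin r) (Fin 2) ℂ,
      (∀ i j, Differentiable ℂ fun z => F z i j) ∧
      (∀ z : ℂ, z.im ≠ 0 → ∀ i j, F z i j = Mfun r Z X z i (Sum.inl j)) ∧
      (∀ x : ℝ, ∀ i j, F (x : ℂ) i j = Mp x i (Sum.inl j)) := by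
  classical
  -- entry formula for Mfun
  have hMfun : ∀ z : ℂ, ∀ i, ∀ j : Fin 2, Mfun r Z X z i (Sum.inl j) =
      Z z i (Sum.inl 0) * (X z)⁻¹ 0 j + Z z i (Sum.inl 1) * (X z)⁻¹ 1 j := by
    intro z i j
    simp [Mfun, Matrix.mul_apply, Fintype.sum_sum_type, Fin.sum_univ_two,
      Matrix.fromBlocks_apply₁₁, Matrix.fromBlocks_apply₂₁]
  have hXinv : ∀ z : ℂ, z.im ≠ 0 → (X z)⁻¹ = adj2 (X z) :=
    fun z hz => adj2_eq_inv (X z) (hXdet z hz)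
  -- generic boundary-value identification
  have keyval : ∀ (s : Set ℂ) (x : ℝ), (nhdsWithin (x:ℂ) s).NeBot → (∀ z ∈ s, z.im ≠ 0) →
      ∀ (Mb Zb : Matrix (Fin 2 ⊕ Fin r) (Fin 2 ⊕ Fin r) ℂ) (Xb : Matrix (Fin 2) (Fin 2) ℂ),
      Tendsto (Mfun r Z X) (nhdsWithin (x:ℂ) s) (nhds Mb) →
      Tendsto Z (nhdsWithin (x:ℂ) s) (nhds Zb) →
      Tendsto X (nhdsWithin (x:ℂ) s) (nhds Xb) →
      ∀ i (j : Fin 2), Mb i (Sum.inl j) =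
        Zb i (Sum.inl 0) * adj2 Xb 0 j + Zb i (Sum.inl 1) * adj2 Xb 1 j := by
    intro s x hnb hs Mb Zb Xb hM hZ hX i j
    haveI := hnb
    have t1 : Tendsto (fun z => Mfun r Z X z i (Sum.inl j)) (nhdsWithin (x:ℂ) s)
        (nhds (Mb i (Sum.inl j))) :=
      ((continuous_id.matrix_elem i (Sum.inl j)).tendsto Mb).comp hM
    have hc0 : Tendsto (fun z => Z z i (Sum.inl 0)) (nhdsWithin (x:ℂ) s)
        (nhds (Zb i (Sum.inl 0))) :=
      ((continuous_id.matrix_elem i (Sum.inl 0)).tendsto Zb).comp hZ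
    have hc1 : Tendsto (fun z => Z z i (Sum.inl 1)) (nhdsWithin (x:ℂ) s)
        (nhds (Zb i (Sum.inl 1))) :=
      ((continuous_id.matrix_elem i (Sum.inl 1)).tendsto Zb).comp hZ
    have ha0 : Tendsto (fun z => adj2 (X z) 0 j) (nhdsWithin (x:ℂ) s)
        (nhds (adj2 Xb 0 j)) := ((continuous_adj2_entry 0 j).tendsto Xb).comp hX
    have ha1 : Tendsto (fun z => adj2 (X z) 1 j) (nhdsWithin (x:ℂ) s)
        (nhds (adj2 Xb 1 j)) := ((continuous_adj2_entry 1 j).tendsto Xb).comp hX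
    refine tendsto_nhds_unique (t1.congr' ?_) ((hc0.mul ha0).add (hc1.mul ha1))
    filter_upwards [self_mem_nhdsWithin] with z hz
    rw [hMfun z i j, hXinv z (hs z hz)]
  have hMpval : ∀ (x:ℝ) i (j : Fin 2), Mp x i (Sum.inl j) =
      Zp x i (Sum.inl 0) * adj2 (Xp x) 0 j + Zp x i (Sum.inl 1) * adj2 (Xp x) 1 j :=
    fun x i j => keyval _ x (neBot_upper x) (fun z hz => ne_of_gt hz) _ _ _
      (hMp x) (hZp x) (hXp x) i j
  have hMmval : ∀ (x:ℝ) i (j : Fin 2), Mm x i (Sum.inl j) =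
      Zm x i (Sum.inl 0) * adj2 (Xm x) 0 j + Zm x i (Sum.inl 1) * adj2 (Xm x) 1 j :=
    fun x i j => keyval _ x (neBot_lower x) (fun z hz => ne_of_lt hz) _ _ _
      (hMm x) (hZm x) (hXm x) i j
  -- jump algebra
  have hZpe0 : ∀ (x:ℝ) i, Zp x i (Sum.inl 0) = Zm x i (Sum.inl 0) := by
    intro x i
    rw [hjump x]
    simp [JZmat, Matrix.mul_apply, Matrix.add_apply, Matrix.one_apply,
      Fintype.sum_sum_type, Fin.sum_univ_two]
  have hZpe1 : ∀ (x:ℝ) i, Zp x i (Sum.inl 1) = Zm x i (Sum.inl 1) +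
      Complex.exp ((-(V x) : ℝ) : ℂ) * Zm x i (Sum.inl 0) := by
    intro x i
    rw [hjump x]
    simp [JZmat, Matrix.mul_apply, Matrix.add_apply, Matrix.one_apply,
      Fintype.sum_sum_type, Fin.sum_univ_two]
    ring
  have hXpe0 : ∀ (x:ℝ) (k : Fin 2), Xp x k 0 = Xm x k 0 := by
    intro x k
    rw [hXjump x]
    simp [Matrix.mul_apply, Fin.sum_univ_two]
  have hXpe1 : ∀ (x:ℝ) (k : Fin 2), Xp x k 1 =
      Xm x k 0 * Complex.exp ((-(V x) : ℝ) : ℂ) + Xm x k 1 := by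
    intro x k
    rw [hXjump x]
    simp [Matrix.mul_apply, Fin.sum_univ_two]
  have hcancel : ∀ (x:ℝ) i (j : Fin 2),
      Zp x i (Sum.inl 0) * adj2 (Xp x) 0 j + Zp x i (Sum.inl 1) * adj2 (Xp x) 1 j =
      Zm x i (Sum.inl 0) * adj2 (Xm x) 0 j + Zm x i (Sum.inl 1) * adj2 (Xm x) 1 j := by
    intro x i j
    fin_cases j <;>
      simp only [adj2, Matrix.cons_val', Matrix.cons_val_zero, Matrix.cons_val_one,
        Matrix.head_cons, Matrix.empty_val', Matrix.cons_val_fin_one, Matrix.of_apply,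
        Matrix.head_fin_const, Fin.isValue] <;>
      rw [hZpe0, hZpe1, hXpe0, hXpe1, hXpe0, hXpe1] <;>
      simp only [Matrix.cons_val_zero, Matrix.cons_val_one, Matrix.head_cons,
        Fin.mk_zero, Fin.mk_one] <;> ring
  have hjumpval : ∀ (x:ℝ) i (j : Fin 2), Mp x i (Sum.inl j) = Mm x i (Sum.inl j) := by
    intro x i j
    rw [hMpval, hcancel, ← hMmval]
  -- glued function
  set g : (Fin 2 ⊕ Fin r) → Fin 2 → ℂ → ℂ := fun i j z =>
    if z.im = 0 then
      Zp z.re i (Sum.inl 0) * adj2 (Xp z.re) 0 j + Zp z.re i (Sum.inl 1) * adj2 (Xp z.re) 1 j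
    else Z z i (Sum.inl 0) * adj2 (X z) 0 j + Z z i (Sum.inl 1) * adj2 (X z) 1 j with hgdef
  have hgM : ∀ z : ℂ, z.im ≠ 0 → ∀ i (j : Fin 2), g i j z = Mfun r Z X z i (Sum.inl j) := by
    intro z hz i j
    simp only [hgdef, if_neg hz]
    rw [hMfun z i j, hXinv z hz]
  have hopen : IsOpen {z : ℂ | z.im ≠ 0} :=
    isOpen_compl_singleton.preimage Complex.continuous_im
  have hgdiff : ∀ i (j : Fin 2), ∀ z : ℂ, z.im ≠ 0 → DifferentiableAt ℂ (g i j) z := by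
    intro i j z hz
    have hA : ∀ k l : Fin 2, DifferentiableAt ℂ (fun w => X w k l) z :=
      fun k l => (hXan z hz k l).differentiableAt
    have hB : ∀ k : Fin 2, DifferentiableAt ℂ (fun w => Z w i (Sum.inl k)) z :=
      fun k => (hZan z hz i (Sum.inl k)).differentiableAt
    have hfd : DifferentiableAt ℂ
        (fun w => Z w i (Sum.inl 0) * adj2 (X w) 0 j + Z w i (Sum.inl 1) * adj2 (X w) 1 j) z := by
      fin_cases j <;>
        simp only [adj2, Matrix.cons_val', Matrix.cons_val_zero, Matrix.cons_val_one,
          Matrix.head_cons, Matrix.empty_val', Matrix.cons_val_fin_one, Matrix.of_apply,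
          Matrix.head_fin_const, Fin.isValue] <;>
        first
          | exact ((hB 0).mul (hA 1 1)).add ((hB 1).mul (hA 1 0).neg)
          | exact ((hB 0).mul (hA 0 1).neg).add ((hB 1).mul (hA 0 0))
    refine hfd.congr_of_eventuallyEq ?_
    refine Filter.eventuallyEq_of_mem (hopen.mem_nhds hz) (fun w hw => ?_)
    simp only [hgdef, if_neg (hw : w.im ≠ 0)]
  have hΦcont : ∀ i (j : Fin 2), Continuous fun t : ℝ =>
      Zp t i (Sum.inl 0) * adj2 (Xp t) 0 j + Zp t i (Sum.inl 1) * adj2 (Xp t) 1 j := by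
    intro i j
    exact ((hZpcont.matrix_elem i (Sum.inl 0)).mul
        ((continuous_adj2_entry 0 j).comp hXpcont)).add
      ((hZpcont.matrix_elem i (Sum.inl 1)).mul ((continuous_adj2_entry 1 j).comp hXpcont))
  have hgcont : ∀ i (j : Fin 2), Continuous (g i j) := by
    intro i j
    rw [continuous_iff_continuousAt]
    intro z₀
    by_cases hz₀ : z₀.im = 0
    · have hz0eq : ((z₀.re : ℝ) : ℂ) = z₀ := Complex.ext (by simp) (by simp [hz₀])
      have hval : g i j z₀ = Zp z₀.re i (Sum.inl 0) * adj2 (Xp z₀.re) 0 j +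
          Zp z₀.re i (Sum.inl 1) * adj2 (Xp z₀.re) 1 j := by
        simp only [hgdef, if_pos hz₀]
      have husets : {z : ℂ | z.im < 0} ∪ ({z : ℂ | z.im = 0} ∪ {z : ℂ | 0 < z.im}) =
          Set.univ := by
        ext w
        simp only [Set.mem_union, Set.mem_setOf_eq, Set.mem_univ, iff_true]
        exact lt_trichotomy w.im 0
      have hsplit : nhds z₀ = nhdsWithin z₀ {z : ℂ | z.im < 0} ⊔
          (nhdsWithin z₀ {z : ℂ | z.im = 0} ⊔ nhdsWithin z₀ {z : ℂ | 0 < z.im}) := by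
        conv_lhs => rw [← nhdsWithin_univ, ← husets]
        rw [nhdsWithin_union, nhdsWithin_union]
      unfold ContinuousAt
      rw [hval, hsplit, Filter.tendsto_sup]
      constructor
      · -- lower part
        have base := ((continuous_id.matrix_elem i (Sum.inl j)).tendsto (Mm z₀.re)).comp
          (hMm z₀.re)
        simp only [id_eq] at base
        rw [hz0eq] at base
        have hvm : Mm z₀.re i (Sum.inl j) = Zp z₀.re i (Sum.inl 0) * adj2 (Xp z₀.re) 0 j +
            Zp z₀.re i (Sum.inl 1) * adj2 (Xp z₀.re) 1 j := by
          rw [← hjumpval z₀.re i j, hMpval z₀.re i j]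
        rw [hvm] at base
        refine base.congr' ?_
        filter_upwards [self_mem_nhdsWithin] with w hw
        exact (hgM w (ne_of_lt hw) i j).symm
      rw [Filter.tendsto_sup]
      constructor
      · -- middle part
        have hmid : Tendsto (fun z : ℂ => Zp z.re i (Sum.inl 0) * adj2 (Xp z.re) 0 j +
            Zp z.re i (Sum.inl 1) * adj2 (Xp z.re) 1 j) (nhds z₀)
            (nhds (Zp z₀.re i (Sum.inl 0) * adj2 (Xp z₀.re) 0 j +
              Zp z₀.re i (Sum.inl 1) * adj2 (Xp z₀.re) 1 j)) :=
          ((hΦcont i j).comp Complex.continuous_re).tendsto z₀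
        refine (hmid.mono_left nhdsWithin_le_nhds).congr' ?_
        filter_upwards [self_mem_nhdsWithin] with w hw
        simp only [hgdef, if_pos (hw : w.im = 0)]
      · -- upper part
        have base := ((continuous_id.matrix_elem i (Sum.inl j)).tendsto (Mp z₀.re)).comp
          (hMp z₀.re)
        simp only [id_eq] at base
        rw [hz0eq] at base
        rw [hMpval z₀.re i j] at base
        refine base.congr' ?_
        filter_upwards [self_mem_nhdsWithin] with w hw
        exact (hgM w (ne_of_gt hw) i j).symm
    · exact (hgdiff i j z₀ hz₀).continuousAt
  have hgD : ∀ i (j : Fin 2), Differentiable ℂ (g i j) :=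
    fun i j => differentiable_of_continuous_off_real (g i j) (hgcont i j) (hgdiff i j)
  refine ⟨fun x i j => hjumpval x i j,
    ⟨fun z => Matrix.of fun i j => g i j z, fun i j => hgD i j, ?_, ?_⟩⟩
  · intro z hz i j
    simpa only [Matrix.of_apply] using hgM z hz i j
  · intro x i j
    simp only [Matrix.of_apply, hgdef, Complex.ofReal_im, Complex.ofReal_re,
      if_pos rfl]
    exact (hMpval x i j).symm

end
end
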